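/- Let r ∈ ℕ and let a₁, …, aₙ be distinct positive integers. Then for every coloring χ of the positive integers with r colors there exist positive integers x, c, a nonnegative integer y, and a color t such that χ(x·2^{c·f(aᵢ)}·(y + c·o(aᵢ))) = t for every i ∈ {1,…,n}. -/
import Mathlib


/-- `f n` is the 2-adic valuation of `n`. -/
def f2 (n : ℕ) : ℕ := padicValNat 2 n

/-- `oddPart n = n / 2^{f(n)}` is the odd part of `n`. -/
def oddPart (n : ℕ) : ℕ := n / 2 ^ f2 n

/-- For distinct positive integers `a₁, …, aₙ` and any `r`-coloring of the positive
integers, there are `x, c > 0` and `y ≥ 0` such that all the numbers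
`x·2^{c·f(aᵢ)}·(y + c·o(aᵢ))` receive the same color. -/
theorem stmt11 (r n : ℕ) (a : Fin n → ℕ) (ha : ∀ i, 0 < a i)
    (hainj : Function.Injective a) (χ : ℕ → Fin r) :
    ∃ x c : ℕ, 0 < x ∧ 0 < c ∧ ∃ y : ℕ, ∃ t : Fin r,
      ∀ i : Fin n, χ (x * 2 ^ (c * f2 (a i)) * (y + c * oddPart (a i))) = t := by
  obtain ⟨c, hc, b, t, hmono⟩ := Combinatorics.exists_mono_homothetic_copy
    (Finset.univ.image fun i : Fin n => (f2 (a i), oddPart (a i)))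
    (fun p : ℕ × ℕ => χ (2 ^ p.1 * p.2))
  refine ⟨2 ^ b.1, c, pow_pos two_pos _, hc, b.2, t, fun i => ?_⟩
  have h := hmono (f2 (a i), oddPart (a i)) (Finset.mem_image_of_mem _ (Finset.mem_univ i))
  simp only [Prod.smul_mk, smul_eq_mul, Prod.fst_add, Prod.snd_add] at h
  rw [← h, pow_add]
  ring
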